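/- In the coinvariant algebra ℂ[x_1,...,x_n]/I, with M the operator of multiplication by β_1x_1 + ... + β_{n-1}x_{n-1} and Δ as above, define R = Δ - (multiplication by (n-1)x_1 + (n-2)x_2 + ... + x_{n-1}), and set M_1 = M, M_{k+1} = [M_k, R]. Then M_k equals multiplication by (k-1)!·(β_1 x_1^k + β_2 x_2^k + ... + β_{n-1} x_{n-1}^k). -/

import Mathlib

open MvPolynomial Finset
open scoped Classical

/-- The ideal of `ℂ[x₁,…,xₙ]` generated by the symmetric polynomials with zero
constant term (so that the quotient is the coinvariant algebra). -/
noncomputable def coinvIdeal (n : ℕ) : Ideal (MvPolynomial (Fin n) ℂ) :=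
  Ideal.span {q : MvPolynomial (Fin n) ℂ | q.IsSymmetric ∧ constantCoeff q = 0}

/-- `commIter M R k` is `M_{k+1}`, where `M_1 = M` and `M_{k+1} = [M_k, R]`. -/
noncomputable def commIter {n : ℕ}
    (M R : Module.End ℂ (MvPolynomial (Fin n) ℂ)) : ℕ → Module.End ℂ (MvPolynomial (Fin n) ℂ)
  | 0 => M
  | k + 1 => commIter M R k * R - R * commIter M R k

/-- The operator `E f = ∑ᵢ xᵢ² ∂ᵢ f`. -/
noncomputable def Eop (n : ℕ) : Module.End ℂ (MvPolynomial (Fin n) ℂ) :=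
  ∑ i : Fin n, (LinearMap.mulLeft ℂ (X i ^ 2)).comp (pderiv i).toLinearMap

lemma Eop_apply {n : ℕ} (f : MvPolynomial (Fin n) ℂ) :
    Eop n f = ∑ i : Fin n, X i ^ 2 * pderiv i f := by
  simp [Eop]

lemma Eop_mul {n : ℕ} (q f : MvPolynomial (Fin n) ℂ) :
    Eop n (q * f) = q * Eop n f + Eop n q * f := by
  rw [Eop_apply, Eop_apply, Eop_apply, Finset.mul_sum, Finset.sum_mul,
    ← Finset.sum_add_distrib]
  refine Finset.sum_congr rfl fun i _ => ?_
  rw [pderiv_mul]; ring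

lemma Eop_X_pow {n : ℕ} (i : Fin n) (m : ℕ) :
    Eop n (X i ^ m) = (m : ℂ) • X i ^ (m + 1) := by
  rw [Eop_apply]
  rw [Finset.sum_eq_single i]
  · rcases m with _ | m
    · simp
    · rw [pderiv_pow]
      simp [pderiv_X, Pi.single_apply]
      rw [smul_eq_C_mul]
      simp only [map_add, map_one, map_natCast]
      ring
  · intro j _ hj
    rw [pderiv_pow]
    simp [pderiv_X, Pi.single_apply, hj.symm, Ne.symm hj]
  · simp

lemma Eop_pow_X {n : ℕ} (i : Fin n) (k : ℕ) :
    ((Eop n) ^ k) (X i) = (k.factorial : ℂ) • X i ^ (k + 1) := by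
  induction k with
  | zero => simp
  | succ k ih =>
    rw [pow_succ', Module.End.mul_apply, ih, map_smul, Eop_X_pow, smul_smul]
    congr 1
    push_cast [Nat.factorial_succ]
    ring

lemma term_eq {n : ℕ} (γ : Fin n →₀ ℕ) (i : Fin n) :
    C (((n : ℤ) - 1 - (i : ℕ) - (γ i : ℕ) : ℤ) : ℂ) * X i * monomial γ 1
      = C (((n - 1 - (i : ℕ) : ℕ) : ℂ)) * X i * monomial γ 1
        - X i ^ 2 * pderiv i (monomial γ (1 : ℂ)) := by
  have hc : (((n : ℤ) - 1 - (i : ℕ) - (γ i : ℕ) : ℤ) : ℂ)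
      = ((n - 1 - (i : ℕ) : ℕ) : ℂ) - (γ i : ℂ) := by
    have h1 : ((n - 1 - (i : ℕ) : ℕ) : ℤ) = (n : ℤ) - 1 - (i : ℕ) := by
      have := i.isLt; omega
    push_cast [← h1]
    ring
  rw [hc, map_sub, sub_mul, sub_mul]
  rw [sub_right_inj]
  rcases Nat.eq_zero_or_pos (γ i) with h | h
  · simp [h, pderiv_monomial]
  · have key : Finsupp.single i 2 + (γ - Finsupp.single i 1) = γ + Finsupp.single i 1 := by
      ext j
      rcases eq_or_ne j i with rfl | hj
      · simp [Finsupp.single_apply]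
        omega
      · simp [Finsupp.single_apply, hj, Ne.symm hj]
    calc C ((γ i : ℕ) : ℂ) * X i * monomial γ 1
        = monomial (γ + Finsupp.single i 1) ((γ i : ℕ) : ℂ) := by
          rw [mul_assoc, X, monomial_mul, C_mul_monomial]
          simp [add_comm]
      _ = X i ^ 2 * monomial (γ - Finsupp.single i 1) (1 * (γ i : ℕ) : ℂ) := by
          rw [X_pow_eq_monomial, monomial_mul, key]
          simp
      _ = X i ^ 2 * pderiv i (monomial γ (1:ℂ)) := by simp [pderiv_monomial]

lemma R_eq_neg_Eop {n : ℕ}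
    (D : Module.End ℂ (MvPolynomial (Fin n) ℂ))
    (hD : ∀ γ : Fin n →₀ ℕ,
      D (monomial γ 1) =
        (∑ i : Fin n,
            C (((n : ℤ) - 1 - (i : ℕ) - (γ i : ℕ) : ℤ) : ℂ) * X i) * monomial γ 1)
    (R : Module.End ℂ (MvPolynomial (Fin n) ℂ))
    (hR : R = D - LinearMap.mulLeft ℂ (∑ i : Fin n, C ((n - 1 - (i : ℕ) : ℕ) : ℂ) * X i)) :
    R = -Eop n := by
  refine LinearMap.ext fun f => ?_
  induction f using MvPolynomial.induction_on' with
  | monomial γ a =>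
    have ha : (monomial γ a : MvPolynomial (Fin n) ℂ) = a • monomial γ 1 := by
      simp [smul_monomial]
    rw [ha, map_smul, map_smul]
    congr 1
    rw [hR, LinearMap.sub_apply, LinearMap.mulLeft_apply, hD γ,
      Finset.sum_mul, Finset.sum_mul]
    rw [LinearMap.neg_apply, Eop_apply]
    rw [← Finset.sum_sub_distrib, ← Finset.sum_neg_distrib]
    refine Finset.sum_congr rfl fun i _ => ?_
    rw [term_eq]
    ring
  | add p q hp hq =>
    rw [map_add, map_add, hp, hq]

lemma mulLeft_comm_R {n : ℕ}
    (R : Module.End ℂ (MvPolynomial (Fin n) ℂ)) (hRE : R = -Eop n)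
    (q : MvPolynomial (Fin n) ℂ) :
    LinearMap.mulLeft ℂ q * R - R * LinearMap.mulLeft ℂ q
      = LinearMap.mulLeft ℂ (Eop n q) := by
  refine LinearMap.ext fun f => ?_
  simp only [hRE, LinearMap.sub_apply, Module.End.mul_apply, LinearMap.mulLeft_apply,
    LinearMap.neg_apply, map_neg, Eop_mul q f]
  ring

lemma commIter_eq_mulLeft {n : ℕ}
    (M R : Module.End ℂ (MvPolynomial (Fin n) ℂ)) (hRE : R = -Eop n)
    (p : MvPolynomial (Fin n) ℂ) (hM : M = LinearMap.mulLeft ℂ p) (k : ℕ) :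
    commIter M R k = LinearMap.mulLeft ℂ (((Eop n) ^ k) p) := by
  induction k with
  | zero => simpa [commIter] using hM
  | succ k ih =>
    rw [commIter, ih, mulLeft_comm_R R hRE, pow_succ', Module.End.mul_apply]

theorem commIter_eq_mul {n : ℕ} (β : Fin n → ℂ)
    (D : Module.End ℂ (MvPolynomial (Fin n) ℂ))
    (hD : ∀ γ : Fin n →₀ ℕ,
      D (monomial γ 1) =
        (∑ i : Fin n,
            C (((n : ℤ) - 1 - (i : ℕ) - (γ i : ℕ) : ℤ) : ℂ) * X i) * monomial γ 1)
    (R : Module.End ℂ (MvPolynomial (Fin n) ℂ))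
    (hR : R = D - LinearMap.mulLeft ℂ (∑ i : Fin n, C ((n - 1 - (i : ℕ) : ℕ) : ℂ) * X i))
    (M : Module.End ℂ (MvPolynomial (Fin n) ℂ))
    (hM : M = LinearMap.mulLeft ℂ
      (∑ i ∈ Finset.univ.filter (fun i : Fin n => (i : ℕ) + 1 < n), C (β i) * X i))
    (k : ℕ) (hk : 1 ≤ k) (f : MvPolynomial (Fin n) ℂ) :
    commIter M R (k - 1) f -
      ((k - 1).factorial : ℂ) •
        ((∑ i ∈ Finset.univ.filter (fun i : Fin n => (i : ℕ) + 1 < n), C (β i) * X i ^ k) * f)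
      ∈ coinvIdeal n := by
  obtain ⟨m, rfl⟩ : ∃ m, k = m + 1 := ⟨k - 1, by omega⟩
  have hRE := R_eq_neg_Eop D hD R hR
  have hsucc : m + 1 - 1 = m := rfl
  rw [hsucc, commIter_eq_mulLeft M R hRE _ hM m, LinearMap.mulLeft_apply]
  have hpow : ((Eop n) ^ m)
      (∑ i ∈ Finset.univ.filter (fun i : Fin n => (i : ℕ) + 1 < n), C (β i) * X i)
      = (m.factorial : ℂ) •
        ∑ i ∈ Finset.univ.filter (fun i : Fin n => (i : ℕ) + 1 < n), C (β i) * X i ^ (m + 1) := by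
    rw [map_sum, Finset.smul_sum]
    refine Finset.sum_congr rfl fun i _ => ?_
    rw [← smul_eq_C_mul, map_smul, Eop_pow_X, ← smul_eq_C_mul, smul_comm]
  rw [hpow, smul_mul_assoc, sub_self]
  exact (coinvIdeal n).zero_mem
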